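/- With F, g, Q_i, I = F^⊥ + S_{≥3} as above, and I' = F^⊥·S[ε] + (g − ε·Q_i)·S[ε] ⊆ S[ε] where S[ε] = S ⊗_k k[ε]/(ε²): for every j and k with k ≠ j, the product α_j·Q_k lies in F^⊥, and α_j·Q_j ≡ g (mod F^⊥); consequently in S[ε]/I' the multiplication-by-α_j operator has trace equal to δ_{ij}·ε with respect to the basis (1, α_1,...,α_6, Q_1,...,Q_6). -/

import Mathlib

open MvPolynomial

/-- Composition of powers of the operators `op i`, with multiplicities given by `m`. -/
noncomputable def opPow {k : Type*} [CommSemiring k] {σ : Type*}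
    (op : σ → Module.End k (MvPolynomial σ k)) (m : σ →₀ ℕ) :
    Module.End k (MvPolynomial σ k) :=
  m.support.toList.foldr (fun i L => (op i) ^ (m i) * L) 1

/-- The action of a "differential polynomial" `h` on `F`, each variable of `h` acting by the
operator `op i`. -/
noncomputable def apAct {k : Type*} [CommSemiring k] {σ : Type*}
    (op : σ → Module.End k (MvPolynomial σ k)) (h F : MvPolynomial σ k) : MvPolynomial σ k :=
  h.support.sum fun m => (h.coeff m) • (opPow op m F)

/-- Apolarity contraction `h ∘ F`: each variable of `h` acts as the corresponding partial
derivative. -/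
noncomputable def apContract {k : Type*} [CommSemiring k] {σ : Type*} [DecidableEq σ]
    (h F : MvPolynomial σ k) : MvPolynomial σ k :=
  apAct (fun i => (pderiv i).toLinearMap) h F

section Aux

variable {k : Type*} [CommSemiring k] {σ : Type*} [DecidableEq σ]

lemma opPow_eq_prod (op : σ → Module.End k (MvPolynomial σ k)) (m : σ →₀ ℕ) :
    opPow op m = (m.support.toList.map fun i => op i ^ m i).prod := by
  rw [opPow, List.prod_eq_foldr, List.foldr_map]

lemma pairwise_commute_map (op : σ → Module.End k (MvPolynomial σ k))
    (hop : ∀ a b, Commute (op a) (op b)) (f : σ → ℕ) (l : List σ) :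
    (l.map fun i => op i ^ f i).Pairwise Commute := by
  induction l with
  | nil => simp
  | cons a t ih =>
    rw [List.map_cons, List.pairwise_cons]
    exact ⟨by rintro x hx; obtain ⟨b, -, rfl⟩ := List.mem_map.mp hx; exact (hop a b).pow_pow _ _, ih⟩

lemma opPow_factor (op : σ → Module.End k (MvPolynomial σ k))
    (hop : ∀ a b, Commute (op a) (op b)) (m : σ →₀ ℕ) (j : σ) :
    opPow op m = op j ^ m j * ((m.support.erase j).toList.map fun i => op i ^ m i).prod := by
  rw [opPow_eq_prod]
  by_cases hj : j ∈ m.support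
  · have h1 : m.support.toList.Perm (j :: (m.support.erase j).toList) := by
      have h2 := Finset.toList_insert (s := m.support.erase j) (a := j)
        (Finset.notMem_erase _ _)
      rwa [Finset.insert_erase hj] at h2
    rw [List.Perm.prod_eq' (h1.map _) (pairwise_commute_map op hop _ _), List.map_cons,
      List.prod_cons]
  · rw [Finset.erase_eq_of_notMem hj]
    have h0 : m j = 0 := Finsupp.notMem_support_iff.mp hj
    rw [h0, pow_zero, one_mul]

lemma opPow_single_add (op : σ → Module.End k (MvPolynomial σ k))
    (hop : ∀ a b, Commute (op a) (op b)) (j : σ) (m : σ →₀ ℕ) :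
    opPow op (Finsupp.single j 1 + m) = op j * opPow op m := by
  have hsupp : (Finsupp.single j 1 + m).support.erase j = m.support.erase j := by
    ext a
    rcases eq_or_ne a j with rfl | ha
    · simp
    · simp [Finset.mem_erase, ha, Finsupp.mem_support_iff, Finsupp.add_apply,
        Finsupp.single_apply, Ne.symm ha]
  have happ : ∀ a ∈ (m.support.erase j).toList,
      op a ^ ((Finsupp.single j 1 + m : σ →₀ ℕ) a) = op a ^ m a := by
    intro a ha
    have hne : a ≠ j := Finset.ne_of_mem_erase (Finset.mem_toList.mp ha)
    rw [Finsupp.add_apply, Finsupp.single_apply, if_neg (Ne.symm hne), zero_add]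
  have hj' : ((Finsupp.single j 1 + m : σ →₀ ℕ)) j = m j + 1 := by
    rw [Finsupp.add_apply, Finsupp.single_eq_same, add_comm]
  rw [opPow_factor op hop _ j, opPow_factor op hop m j, hsupp, hj', pow_succ',
    List.map_congr_left happ, mul_assoc]

lemma opPow_zero (op : σ → Module.End k (MvPolynomial σ k)) : opPow op 0 = 1 := by
  simp [opPow]

lemma opPow_single_one (op : σ → Module.End k (MvPolynomial σ k)) (j : σ) :
    opPow op (Finsupp.single j 1) = op j := by
  rw [opPow, Finsupp.support_single_ne_zero _ one_ne_zero]
  simp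

lemma apAct_monomial (op : σ → Module.End k (MvPolynomial σ k)) (m : σ →₀ ℕ) (c : k)
    (F : MvPolynomial σ k) : apAct op (monomial m c) F = c • opPow op m F := by
  by_cases hc : c = 0
  · simp [apAct, hc, support_monomial]
  · simp [apAct, support_monomial, hc, coeff_monomial]

lemma apAct_eq_sum (op : σ → Module.End k (MvPolynomial σ k)) (h F : MvPolynomial σ k) :
    apAct op h F = (AddMonoidAlgebra.coeff h).sum fun m c => c • opPow op m F := rfl

lemma apAct_add (op : σ → Module.End k (MvPolynomial σ k)) (h₁ h₂ F : MvPolynomial σ k) :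
    apAct op (h₁ + h₂) F = apAct op h₁ F + apAct op h₂ F := by
  rw [apAct_eq_sum, apAct_eq_sum, apAct_eq_sum, show AddMonoidAlgebra.coeff (h₁ + h₂)
    = AddMonoidAlgebra.coeff h₁ + AddMonoidAlgebra.coeff h₂ from rfl]
  exact Finsupp.sum_add_index' (fun m => by simp) (fun m c₁ c₂ => add_smul _ _ _)

lemma apAct_smul (op : σ → Module.End k (MvPolynomial σ k)) (c : k) (h F : MvPolynomial σ k) :
    apAct op (c • h) F = c • apAct op h F := by
  rw [apAct_eq_sum, apAct_eq_sum, show AddMonoidAlgebra.coeff (c • h)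
    = c • AddMonoidAlgebra.coeff h from rfl, Finsupp.sum_smul_index' (fun m => by simp), Finsupp.smul_sum]
  simp [mul_smul]

end Aux

section Aux2

variable {k : Type*} [CommSemiring k] {σ : Type*} [DecidableEq σ]

lemma my_pderiv_comm (i j : σ) (f : MvPolynomial σ k) :
    pderiv i (pderiv j f) = pderiv j (pderiv i f) := by
  induction f using MvPolynomial.induction_on' with
  | monomial u a =>
    rcases eq_or_ne i j with rfl | hij
    · rfl
    · simp only [pderiv_monomial]
      have e1 : ((u - Finsupp.single j 1 : σ →₀ ℕ)) i = u i := by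
        rw [Finsupp.tsub_apply, Finsupp.single_apply, if_neg (Ne.symm hij), tsub_zero]
      have e2 : ((u - Finsupp.single i 1 : σ →₀ ℕ)) j = u j := by
        rw [Finsupp.tsub_apply, Finsupp.single_apply, if_neg hij, tsub_zero]
      rw [e1, e2, tsub_tsub, tsub_tsub, add_comm (Finsupp.single j 1)]
      ring_nf
  | add p q hp hq => simp [hp, hq]

lemma pderiv_commute (i j : σ) :
    Commute ((pderiv i : Derivation k (MvPolynomial σ k) _).toLinearMap)
      ((pderiv j : Derivation k (MvPolynomial σ k) _).toLinearMap) :=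
  LinearMap.ext fun f => my_pderiv_comm i j f

/-- `apContract · F` as a linear map. -/
noncomputable def apContractₗ (F : MvPolynomial σ k) :
    MvPolynomial σ k →ₗ[k] MvPolynomial σ k where
  toFun h := apContract h F
  map_add' h₁ h₂ := apAct_add _ h₁ h₂ F
  map_smul' c h := apAct_smul _ c h F

lemma apContractₗ_apply (F h : MvPolynomial σ k) : apContractₗ F h = apContract h F := rfl

lemma apContract_monomial (m : σ →₀ ℕ) (c : k) (F : MvPolynomial σ k) :
    apContract (monomial m c) F = c • (opPow (fun i => (pderiv i).toLinearMap) m) F := by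
  rw [apContract, apAct_monomial]

lemma apContract_X (l : σ) (F : MvPolynomial σ k) : apContract (X l) F = pderiv l F := by
  rw [show (X l : MvPolynomial σ k) = monomial (Finsupp.single l 1) 1 from rfl,
    apContract_monomial, opPow_single_one]
  simp

lemma apContract_X_mul (j : σ) (h F : MvPolynomial σ k) :
    apContract (X j * h) F = pderiv j (apContract h F) := by
  induction h using MvPolynomial.induction_on' with
  | monomial u a =>
    rw [show (X j : MvPolynomial σ k) = monomial (Finsupp.single j 1) 1 from rfl,
      monomial_mul, one_mul, apContract_monomial, apContract_monomial,
      opPow_single_add _ pderiv_commute j u]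
    rw [Derivation.map_smul]
    rfl
  | add p q hp hq =>
    have : X j * (p + q) = X j * p + X j * q := mul_add _ _ _
    rw [this, ← apContractₗ_apply, map_add, apContractₗ_apply, apContractₗ_apply, hp, hq,
      ← apContractₗ_apply F p, ← apContractₗ_apply F q, ← map_add, ← map_add,
      apContractₗ_apply]

end Aux2

section Aux3

variable {k : Type*} [CommSemiring k] {σ : Type*} [DecidableEq σ]

lemma my_degree_add (a b : σ →₀ ℕ) : (a + b).degree = a.degree + b.degree := by
  simp [Finsupp.degree_eq_weight_one, map_add]

lemma my_degree_single (i : σ) : (Finsupp.single i 1).degree = 1 := by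
  rw [Finsupp.degree_apply, Finsupp.support_single_ne_zero _ one_ne_zero]
  simp

lemma my_isHomogeneous_pderiv {n : ℕ} {F : MvPolynomial σ k} (hF : F.IsHomogeneous (n + 1))
    (i : σ) : (pderiv i F).IsHomogeneous n := by
  have hrw : pderiv i F
      = ∑ m ∈ F.support, monomial (m - Finsupp.single i 1) (coeff m F * (m i : k)) := by
    conv_lhs => rw [← support_sum_monomial_coeff F]
    rw [map_sum]
    simp_rw [pderiv_monomial]
  rw [hrw]
  apply IsHomogeneous.sum
  intro m hm
  by_cases h0 : m i = 0
  · rw [h0]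
    simpa using isHomogeneous_zero σ k n
  · apply isHomogeneous_monomial
    have hdm : m.degree = n + 1 := by
      by_contra hne
      exact mem_support_iff.mp hm (hF.coeff_eq_zero hne)
    have hle : Finsupp.single i 1 ≤ m :=
      Finsupp.single_le_iff.mpr (Nat.one_le_iff_ne_zero.mpr h0)
    have heq : (m - Finsupp.single i 1) + Finsupp.single i 1 = m := tsub_add_cancel_of_le hle
    have hd := my_degree_add (m - Finsupp.single i 1) (Finsupp.single i 1)
    rw [heq, hdm, my_degree_single] at hd
    omega

lemma eq_single_of_degree_one {d : σ →₀ ℕ} (hd : d.degree = 1) :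
    ∃ i, d = Finsupp.single i 1 := by
  obtain ⟨i, hi⟩ : d.support.Nonempty := by
    rw [Finset.nonempty_iff_ne_empty]
    intro h
    rw [Finsupp.degree_apply, h] at hd
    simp at hd
  have h1 : d i ≤ 1 := hd ▸ Finsupp.le_degree i d
  have h2 : 1 ≤ d i := Nat.one_le_iff_ne_zero.mpr (Finsupp.mem_support_iff.mp hi)
  refine ⟨i, ?_⟩
  ext a
  rcases eq_or_ne a i with rfl | ha
  · rw [Finsupp.single_eq_same]; omega
  · rw [Finsupp.single_eq_of_ne' (Ne.symm ha)]
    by_contra hda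
    have hsub : ({a, i} : Finset σ) ⊆ d.support := by
      intro x hx
      rcases Finset.mem_insert.mp hx with rfl | hx
      · exact Finsupp.mem_support_iff.mpr hda
      · rwa [Finset.mem_singleton.mp hx]
    have hsum : d a + d i ≤ ∑ x ∈ d.support, d x := by
      simpa [Finset.sum_pair ha] using Finset.sum_le_sum_of_subset (f := fun x => d x) hsub
    rw [Finsupp.degree_apply] at hd
    omega

lemma eq_sum_X_of_isHomogeneous_one {ι : Type*} [Fintype ι] [DecidableEq ι]
    {h : MvPolynomial ι k} (hh : h.IsHomogeneous 1) :
    h = ∑ i : ι, C (coeff (Finsupp.single i 1) h) * X i := by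
  ext d
  rw [coeff_sum]
  simp_rw [coeff_C_mul, coeff_X']
  by_cases hd : ∃ i, d = Finsupp.single i 1
  · obtain ⟨i₀, rfl⟩ := hd
    rw [Finset.sum_eq_single i₀]
    · simp
    · intro b _ hb
      rw [if_neg fun he => hb (Finsupp.single_left_injective one_ne_zero he), mul_zero]
    · intro hmem
      exact absurd (Finset.mem_univ _) hmem
  · have h0 : coeff d h = 0 := by
      by_contra hc
      have hdeg : d.degree = 1 := by
        by_contra hne
        exact hc (hh.coeff_eq_zero hne)
      exact hd (eq_single_of_degree_one hdeg)
    rw [h0]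
    symm
    apply Finset.sum_eq_zero
    intro i _
    rw [if_neg fun he => hd ⟨i, he.symm⟩, mul_zero]

end Aux3

set_option maxHeartbeats 1000000
set_option synthInstance.maxHeartbeats 400000

/-- With `F, g, Q_i` as before, `k[ε] = k ⊕ kε` the dual numbers (a commutative `k`-algebra
with basis `(1, ε)` and `ε² = 0`), `S[ε] = MvPolynomial (Fin 6) k[ε]`, and
`I' = F^⊥·S[ε] + (g − ε·Q_i)·S[ε]`: for all `l ≠ j` the product `α_j·Q_l` lies in `F^⊥`,
and `α_j·Q_j ≡ g (mod F^⊥)`; consequently in `S[ε]/I'` the multiplication-by-`α_j` operator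
has trace `δ_{ij}·ε` with respect to the basis `(1, α_1,…,α_6, Q_1,…,Q_6)`. -/
theorem trace_of_multiplication_by_alpha {k : Type*} [Field k] [CharZero k]
    (F : MvPolynomial (Fin 6) k) (hF : F.IsHomogeneous 3)
    (g : MvPolynomial (Fin 6) k) (hg : apContract g F = 1)
    (Q : Fin 6 → MvPolynomial (Fin 6) k) (hQhom : ∀ i, (Q i).IsHomogeneous 2)
    (hQ : ∀ i, apContract (Q i) F = X i)
    (Dk : Type*) [CommRing Dk] [Algebra k Dk] (ε : Dk) (hε2 : ε ^ 2 = 0)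
    (hDk : ∃ bD : Module.Basis (Fin 2) k Dk, bD 0 = 1 ∧ bD 1 = ε)
    (ι : MvPolynomial (Fin 6) k →+* MvPolynomial (Fin 6) Dk)
    (hι : ι = MvPolynomial.map (algebraMap k Dk))
    (I' : Fin 6 → Ideal (MvPolynomial (Fin 6) Dk))
    (hI' : ∀ i, I' i = Ideal.span
      (ι '' {h : MvPolynomial (Fin 6) k | apContract h F = 0} ∪ {ι g - C ε * ι (Q i)})) :
    (∀ j l : Fin 6, l ≠ j → apContract (X j * Q l) F = 0)
    ∧ (∀ j : Fin 6, apContract (X j * Q j - g) F = 0)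
    ∧ ∀ (i j : Fin 6)
        (b : Module.Basis (Unit ⊕ Fin 6 ⊕ Fin 6) Dk (MvPolynomial (Fin 6) Dk ⧸ I' i)),
        (∀ u, b u = Sum.elim (fun _ => Ideal.Quotient.mk (I' i) 1)
          (Sum.elim (fun l => Ideal.Quotient.mk (I' i) (ι (X l)))
            (fun l => Ideal.Quotient.mk (I' i) (ι (Q l)))) u) →
        Matrix.trace (LinearMap.toMatrix b b
          (LinearMap.mulLeft Dk (Ideal.Quotient.mk (I' i) (ι (X j)))))
          = if j = i then ε else 0 := by
  classical
  have hXmul : ∀ (j : Fin 6) (h : MvPolynomial (Fin 6) k),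
      apContract (X j * h) F = pderiv j (apContract h F) := fun j h => apContract_X_mul j h F
  have hsubc : ∀ a c : MvPolynomial (Fin 6) k,
      apContract (a - c) F = apContract a F - apContract c F := by
    intro a c
    rw [← apContractₗ_apply, map_sub, apContractₗ_apply, apContractₗ_apply]
  have part1 : ∀ j l : Fin 6, l ≠ j → apContract (X j * Q l) F = 0 := by
    intro j l hlj
    rw [hXmul, hQ l, pderiv_X_of_ne hlj]
  have part2 : ∀ j : Fin 6, apContract (X j * Q j - g) F = 0 := by
    intro j
    rw [hsubc, hXmul, hQ j, pderiv_X_self, hg, sub_self]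
  refine ⟨part1, part2, ?_⟩
  intro i j b hb
  set mkq := Ideal.Quotient.mk (I' i) with hmkq
  set f := LinearMap.mulLeft Dk (mkq (ι (X j))) with hf
  have hb1 : b (Sum.inl ()) = mkq 1 := by rw [hb]; rfl
  have hα : ∀ l, b (Sum.inr (Sum.inl l)) = mkq (ι (X l)) := fun l => by rw [hb]; rfl
  have hQb : ∀ l, b (Sum.inr (Sum.inr l)) = mkq (ι (Q l)) := fun l => by rw [hb]; rfl
  have hmem0 : ∀ h : MvPolynomial (Fin 6) k, apContract h F = 0 → mkq (ι h) = 0 := by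
    intro h hh
    rw [hmkq, Ideal.Quotient.eq_zero_iff_mem, hI' i]
    exact Ideal.subset_span (Or.inl ⟨h, hh, rfl⟩)
  have hmemg : mkq (ι g) = mkq (C ε * ι (Q i)) := by
    rw [hmkq, Ideal.Quotient.eq, hI' i]
    exact Ideal.subset_span (Or.inr rfl)
  have hsmul : ∀ (a : Dk) (x : MvPolynomial (Fin 6) Dk), mkq (C a * x) = a • mkq x := by
    intro a x
    have h1 : (Ideal.Quotient.mkₐ Dk (I' i)) (a • x)
        = a • (Ideal.Quotient.mkₐ Dk (I' i)) x := map_smul _ a x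
    simpa [Ideal.Quotient.mkₐ_eq_mk, MvPolynomial.smul_eq_C_mul, hmkq] using h1
  have htr : Matrix.trace (LinearMap.toMatrix b b f) = ∑ u, b.repr (f (b u)) u := by
    simp [Matrix.trace, Matrix.diag, LinearMap.toMatrix_apply]
  -- piece 1
  have c1 : b.repr (f (b (Sum.inl ()))) (Sum.inl ()) = 0 := by
    have h1 : f (b (Sum.inl ())) = b (Sum.inr (Sum.inl j)) := by
      rw [hb1, hf, LinearMap.mulLeft_apply, ← map_mul, mul_one, ← hα j]
    rw [h1, b.repr_self, Finsupp.single_apply, if_neg (by simp)]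
  -- piece 2
  have c2 : ∀ l : Fin 6, b.repr (f (b (Sum.inr (Sum.inl l)))) (Sum.inr (Sum.inl l)) = 0 := by
    intro l
    set h₁ := pderiv j (pderiv l F) with hh₁
    have hcontr : apContract (X j * X l) F = h₁ := by rw [hXmul, apContract_X]
    have hhom : h₁.IsHomogeneous 1 :=
      my_isHomogeneous_pderiv (n := 1) (my_isHomogeneous_pderiv (n := 2) hF l) j
    set c : Fin 6 → k := fun m => coeff (Finsupp.single m 1) h₁ with hc
    have hrep : h₁ = ∑ m, C (c m) * X m := eq_sum_X_of_isHomogeneous_one hhom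
    have hzero : apContract (X j * X l - ∑ m, c m • Q m) F = 0 := by
      rw [hsubc, hcontr]
      have hsum : apContract (∑ m, c m • Q m) F = ∑ m : Fin 6, c m • X m := by
        rw [← apContractₗ_apply, map_sum]
        simp_rw [map_smul, apContractₗ_apply, hQ]
      rw [hsum, hrep]
      simp [smul_eq_C_mul]
    have hmk : f (b (Sum.inr (Sum.inl l)))
        = ∑ m, (algebraMap k Dk (c m)) • b (Sum.inr (Sum.inr m)) := by
      rw [hα l, hf, LinearMap.mulLeft_apply, ← map_mul, ← map_mul]
      have step : mkq (ι (X j * X l)) = mkq (ι (∑ m, c m • Q m)) := by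
        rw [hmkq, Ideal.Quotient.eq, ← map_sub, hI' i]
        exact Ideal.subset_span (Or.inl ⟨_, hzero, rfl⟩)
      rw [step, map_sum, map_sum]
      apply Finset.sum_congr rfl
      intro m _
      rw [smul_eq_C_mul, map_mul, hι, MvPolynomial.map_C, ← hι, hsmul, hQb m]
    rw [hmk]
    have hrepr : b.repr (∑ m : Fin 6, (algebraMap k Dk) (c m) • b (Sum.inr (Sum.inr m)))
        = ∑ m : Fin 6, (algebraMap k Dk) (c m) • Finsupp.single (Sum.inr (Sum.inr m)) (1 : Dk) := by
      rw [map_sum]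
      simp_rw [map_smul, Module.Basis.repr_self]
    rw [hrepr, Finsupp.finset_sum_apply]
    apply Finset.sum_eq_zero
    intro m _
    rw [Finsupp.smul_apply, Finsupp.single_apply, if_neg (by simp), smul_zero]
  -- piece 3
  have c3ne : ∀ l : Fin 6, l ≠ j →
      b.repr (f (b (Sum.inr (Sum.inr l)))) (Sum.inr (Sum.inr l)) = 0 := by
    intro l hlj
    have h1 : f (b (Sum.inr (Sum.inr l))) = 0 := by
      rw [hQb l, hf, LinearMap.mulLeft_apply, ← map_mul, ← map_mul,
        hmem0 _ (part1 j l hlj)]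
    rw [h1, map_zero]
    rfl
  have c3j : b.repr (f (b (Sum.inr (Sum.inr j)))) (Sum.inr (Sum.inr j))
      = if i = j then ε else 0 := by
    have h1 : f (b (Sum.inr (Sum.inr j))) = ε • b (Sum.inr (Sum.inr i)) := by
      rw [hQb j, hf, LinearMap.mulLeft_apply, ← map_mul, ← map_mul]
      have e1 : mkq (ι (X j * Q j)) = mkq (ι g) := by
        rw [hmkq, Ideal.Quotient.eq, ← map_sub, hI' i]
        exact Ideal.subset_span (Or.inl ⟨_, part2 j, rfl⟩)
      rw [e1, hmemg, hsmul, hQb i]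
    rw [h1]
    have h2 : b.repr (ε • b (Sum.inr (Sum.inr i)))
        = ε • Finsupp.single (Sum.inr (Sum.inr i)) (1 : Dk) := by
      rw [map_smul, Module.Basis.repr_self]
    rw [h2, Finsupp.smul_apply, Finsupp.single_apply]
    rcases eq_or_ne i j with rfl | hij
    · simp
    · rw [if_neg (by simp [hij]), smul_zero, if_neg hij]
  -- assemble
  rw [htr, Fintype.sum_sum_type, Fintype.sum_sum_type]
  have s1 : ∑ u : Unit, b.repr (f (b (Sum.inl u))) (Sum.inl u) = 0 := by simp [c1]
  have s2 : ∑ l : Fin 6, b.repr (f (b (Sum.inr (Sum.inl l)))) (Sum.inr (Sum.inl l)) = 0 :=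
    Finset.sum_eq_zero fun l _ => c2 l
  have s3 : ∑ l : Fin 6, b.repr (f (b (Sum.inr (Sum.inr l)))) (Sum.inr (Sum.inr l))
      = if i = j then ε else 0 := by
    rw [Finset.sum_eq_single j]
    · exact c3j
    · intro l _ hlj
      exact c3ne l hlj
    · intro hmem
      exact absurd (Finset.mem_univ _) hmem
  rw [s1, s2, s3, zero_add, zero_add]
  by_cases hij : i = j <;> simp [hij, eq_comm]
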